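/- Let H be a complex Hilbert space, P an orthogonal projection on H (P ∘ P = P, P† = P), and u an invertible bounded operator on H such that [P, u] and [P, u⁻¹] are compact operators. Define T := P ∘ u ∘ P + (I − P). Then the kernel of T and the kernel of the adjoint T† are finite-dimensional subspaces of H, and the range of T is closed. -/

import Mathlib

open ContinuousLinearMap Metric Set

section Aux

variable {H : Type*} [NormedAddCommGroup H] [InnerProductSpace ℂ H] [CompleteSpace H]

local notation "⟪" x ", " y "⟫" => @inner ℂ _ _ x y

/-- Riesz: the kernel of `1 + K` is finite dimensional for a compact operator `K`. -/
lemma aux_fd_ker_one_add (K : H →L[ℂ] H) (hK : IsCompactOperator ⇑K) :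
    FiniteDimensional ℂ (LinearMap.ker (((1 : H →L[ℂ] H) + K) : H →ₗ[ℂ] H)) := by
  set N := LinearMap.ker (((1 : H →L[ℂ] H) + K) : H →ₗ[ℂ] H) with hN
  have hK' : IsCompactOperator ⇑K.toLinearMap := hK
  obtain ⟨C, hCcomp, hCsub⟩ := hK'.image_closedBall_subset_compact (𝕜₁ := ℂ) 1
  have hNclosed : IsClosed (N : Set H) := ContinuousLinearMap.isClosed_ker ((1 : H →L[ℂ] H) + K)
  -- the image of the closed unit ball of N in H
  have himg : ((↑) '' (closedBall (0 : N) 1) : Set H) = (N : Set H) ∩ closedBall 0 1 := by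
    ext x
    constructor
    · rintro ⟨y, hy, rfl⟩
      exact ⟨y.2, by simpa [Metric.mem_closedBall, dist_eq_norm] using hy⟩
    · rintro ⟨hx1, hx2⟩
      exact ⟨⟨x, hx1⟩, by simpa [Metric.mem_closedBall, dist_eq_norm] using hx2, rfl⟩
  have hsub : ((N : Set H) ∩ closedBall 0 1) ⊆ (fun y => -y) '' C := by
    rintro x ⟨hx1, hx2⟩
    have hx : (1 + K) x = 0 := hx1
    have hxe : x = -(K x) := by
      have h0 : x + K x = 0 := by simpa using hx
      rw [eq_neg_iff_add_eq_zero]; exact h0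
    exact ⟨K x, hCsub ⟨x, hx2, rfl⟩, hxe.symm⟩
  have hCneg : IsCompact ((fun y : H => -y) '' C) := hCcomp.image continuous_neg
  have hclosed' : IsClosed ((N : Set H) ∩ closedBall 0 1) :=
    hNclosed.inter Metric.isClosed_closedBall
  have hcomp : IsCompact ((N : Set H) ∩ closedBall 0 1) :=
    hCneg.of_isClosed_subset hclosed' hsub
  have : IsCompact (closedBall (0 : N) 1) := by
    rw [Subtype.isCompact_iff, himg]; exact hcomp
  exact FiniteDimensional.of_isCompact_closedBall₀ ℂ one_pos this


/-- Schauder in Hilbert space: the adjoint of a compact operator is compact. -/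
lemma aux_adjoint_compact (K : H →L[ℂ] H) (hK : IsCompactOperator ⇑K) :
    IsCompactOperator ⇑(adjoint K) := by
  set A := adjoint K with hA
  have hKA : IsCompactOperator (⇑K ∘ ⇑A) := hK.comp_clm A
  have hKA' : IsCompactOperator ⇑((K * A).toLinearMap) := by
    have : ⇑((K * A).toLinearMap) = ⇑K ∘ ⇑A := by ext x; simp [mul_apply]
    rw [this]; exact hKA
  obtain ⟨C, hCcomp, hCsub⟩ := hKA'.image_closedBall_subset_compact (𝕜₁ := ℂ) 1
  rw [show ⇑A = ⇑(A.toLinearMap) from rfl,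
    isCompactOperator_iff_isCompact_closure_image_closedBall (𝕜₁ := ℂ) A.toLinearMap one_pos]
  refine TotallyBounded.isCompact_of_isClosed (TotallyBounded.closure ?_) isClosed_closure
  rw [totallyBounded_iff]
  intro ε hε
  -- the image of the ball under K ∘ A is totally bounded
  have htb : TotallyBounded ((⇑K ∘ ⇑A) '' closedBall 0 1) :=
    (hCcomp.totallyBounded).subset hCsub
  have hδ : (0:ℝ) < ε ^ 2 / 4 := by positivity
  obtain ⟨t, hts, htfin, htcov⟩ := totallyBounded_iff_subset.mp htb
    {p : H × H | dist p.1 p.2 < ε ^ 2 / 4} (dist_mem_uniformity hδ)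
  have hsel : ∀ c ∈ t, ∃ x, x ∈ closedBall (0:H) 1 ∧ (⇑K ∘ ⇑A) x = c := by
    intro c hc
    rcases hts hc with ⟨x, hx, hxc⟩
    exact ⟨x, hx, hxc⟩
  choose! g hg1 hg2 using hsel
  refine ⟨(fun c => A (g c)) '' t, htfin.image _, ?_⟩
  rintro _ ⟨x, hx, rfl⟩
  have hmem : (⇑K ∘ ⇑A) x ∈ (⇑K ∘ ⇑A) '' closedBall 0 1 := ⟨x, hx, rfl⟩
  rcases mem_iUnion₂.mp (htcov hmem) with ⟨c, hct, hcd⟩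
  have hcd' : dist (K (A x)) c < ε ^ 2 / 4 := hcd
  refine mem_iUnion₂.mpr ⟨A (g c), ⟨c, hct, rfl⟩, ?_⟩
  -- key estimate
  set z := x - g c with hz
  have hnz : ‖z‖ ≤ 2 := by
    have h1 : ‖x‖ ≤ 1 := by simpa [Metric.mem_closedBall, dist_eq_norm] using hx
    have h2 : ‖g c‖ ≤ 1 := by
      simpa [Metric.mem_closedBall, dist_eq_norm] using hg1 c hct
    calc ‖x - g c‖ ≤ ‖x‖ + ‖g c‖ := norm_sub_le _ _
    _ ≤ 2 := by linarith
  have hiden : ⟪A z, A z⟫ = ⟪z, K (A z)⟫ := by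
    rw [hA, adjoint_inner_left]
  have hsq : ‖A z‖ ^ 2 ≤ ‖z‖ * ‖K (A z)‖ := by
    have h1 : ‖A z‖ ^ 2 = RCLike.re ⟪A z, A z⟫ := by
      rw [inner_self_eq_norm_sq]
    have h2 : RCLike.re ⟪z, K (A z)⟫ ≤ ‖(⟪z, K (A z)⟫ : ℂ)‖ := RCLike.re_le_norm _
    have h3 : ‖(⟪z, K (A z)⟫ : ℂ)‖ ≤ ‖z‖ * ‖K (A z)‖ := norm_inner_le_norm _ _
    rw [h1, hiden]
    linarith
  have hKAz : ‖K (A z)‖ < ε ^ 2 / 4 := by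
    have : K (A z) = K (A x) - K (A (g c)) := by simp [hz, map_sub]
    rw [this, ← dist_eq_norm]
    have hc2 : K (A (g c)) = c := hg2 c hct
    rw [hc2]; exact hcd'
  have hfin : ‖A x - A (g c)‖ ^ 2 < ε ^ 2 := by
    have hAz : A z = A x - A (g c) := by simp [hz, map_sub]
    rw [← hAz]
    calc ‖A z‖ ^ 2 ≤ ‖z‖ * ‖K (A z)‖ := hsq
    _ ≤ 2 * ‖K (A z)‖ := by
        have := norm_nonneg (K (A z)); nlinarith
    _ < 2 * (ε ^ 2 / 4) := by
        have hz0 : (0:ℝ) ≤ ‖K (A z)‖ := norm_nonneg _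
        linarith
    _ < ε ^ 2 := by nlinarith
  have : ‖A x - A (g c)‖ < ε := by
    nlinarith [norm_nonneg (A x - A (g c))]
  simpa [Metric.mem_ball, dist_eq_norm] using this


/-- Atkinson (one-sided): if `S * T - 1` is compact, then `T` has finite-dimensional kernel
and closed range. -/
lemma aux_atkinson (T S : H →L[ℂ] H) (hK : IsCompactOperator ⇑(S * T - 1)) :
    FiniteDimensional ℂ (LinearMap.ker (T : H →ₗ[ℂ] H)) ∧
      IsClosed (LinearMap.range (T : H →ₗ[ℂ] H) : Set H) := by
  set Kc := S * T - 1 with hKc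
  have hpt : ∀ x : H, S (T x) = x + Kc x := by
    intro x
    have h1 : (S * T : H →L[ℂ] H) = 1 + Kc := by rw [hKc]; abel
    have h2 : (S * T) x = (1 + Kc) x := by rw [h1]
    simpa [mul_apply, add_apply] using h2
  haveI hfd1 : FiniteDimensional ℂ (LinearMap.ker (((1 : H →L[ℂ] H) + Kc) : H →ₗ[ℂ] H)) :=
    aux_fd_ker_one_add Kc hK
  have hker_le : LinearMap.ker (T : H →ₗ[ℂ] H) ≤
      LinearMap.ker (((1 : H →L[ℂ] H) + Kc) : H →ₗ[ℂ] H) := by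
    intro x hx
    have hx0 : T x = 0 := hx
    have : (1 + Kc) x = x + Kc x := by simp [add_apply]
    have h2 : x + Kc x = S (T x) := (hpt x).symm
    simp only [LinearMap.mem_ker]
    rw [show (((1 : H →L[ℂ] H) : H →ₗ[ℂ] H) + (Kc : H →ₗ[ℂ] H)) x = x + Kc x from this, h2, hx0,
      map_zero]
  haveI hfdker : FiniteDimensional ℂ (LinearMap.ker (T : H →ₗ[ℂ] H)) :=
    Submodule.finiteDimensional_of_le hker_le
  refine ⟨hfdker, ?_⟩
  set N := LinearMap.ker (T : H →ₗ[ℂ] H) with hNdef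
  set M := Nᗮ with hMdef
  haveI : CompleteSpace M := (N.isClosed_orthogonal).completeSpace_coe
  -- T is bounded below on M
  have key : ∃ c : ℝ, 0 < c ∧ ∀ x : M, ‖(x : H)‖ ≤ c * ‖T x‖ := by
    by_contra hcon
    push_neg at hcon
    have hseq : ∀ n : ℕ, ∃ y : H, y ∈ M ∧ ‖y‖ = 1 ∧ ‖T y‖ < 1 / (n + 1) := by
      intro n
      obtain ⟨x, hx⟩ := hcon (n + 1) (by positivity)
      have hxne : (x : H) ≠ 0 := by
        intro h0
        have hz : ‖(x:H)‖ = 0 := by rw [h0]; simp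
        have hn : (0:ℝ) ≤ ((n:ℝ) + 1) * ‖T (x:H)‖ := by positivity
        rw [hz] at hx
        linarith
      have hxpos : 0 < ‖(x:H)‖ := norm_pos_iff.mpr hxne
      have hna : ‖((‖(x:H)‖ : ℂ))⁻¹‖ = ‖(x:H)‖⁻¹ := by
        rw [norm_inv, Complex.norm_real, Real.norm_of_nonneg (norm_nonneg _)]
      refine ⟨((‖(x : H)‖ : ℂ))⁻¹ • (x : H), M.smul_mem _ x.2, ?_, ?_⟩
      · rw [norm_smul, hna, inv_mul_cancel₀ (ne_of_gt hxpos)]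
      · rw [map_smul, norm_smul, hna, inv_mul_lt_iff₀ hxpos, mul_one_div,
          lt_div_iff₀ (by positivity : (0:ℝ) < (n:ℝ) + 1)]
        nlinarith [hx]
    choose y hyM hy1 hyT using hseq
    have hybd : ∀ n, Kc (y n) ∈ Kc '' closedBall 0 1 := by
      intro n
      exact ⟨y n, by simp [Metric.mem_closedBall, dist_eq_norm, hy1 n], rfl⟩
    have hK' : IsCompactOperator ⇑Kc.toLinearMap := hK
    obtain ⟨C, hCcomp, hCsub⟩ := hK'.image_closedBall_subset_compact (𝕜₁ := ℂ) 1
    have hyC : ∀ n, Kc (y n) ∈ C := fun n => hCsub (hybd n)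
    obtain ⟨z, -, φ, hφ, hz⟩ := hCcomp.tendsto_subseq hyC
    -- T (y (φ n)) → 0
    have hTy : Filter.Tendsto (fun n => T (y (φ n))) Filter.atTop (nhds 0) := by
      rw [tendsto_zero_iff_norm_tendsto_zero]
      apply squeeze_zero (fun n => norm_nonneg _) (fun n => le_of_lt (hyT (φ n)))
      have h1 : Filter.Tendsto (fun n : ℕ => 1 / ((n:ℝ) + 1)) Filter.atTop (nhds 0) :=
        tendsto_one_div_add_atTop_nhds_zero_nat
      apply squeeze_zero (fun n => by positivity) _ h1
      intro n
      have hle : (n:ℝ) ≤ (φ n : ℝ) := Nat.cast_le.mpr hφ.le_apply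
      have : (n:ℝ) + 1 ≤ (φ n : ℝ) + 1 := by linarith
      apply div_le_div_of_nonneg_left one_pos.le (by positivity) this
    have hSTy : Filter.Tendsto (fun n => S (T (y (φ n)))) Filter.atTop (nhds 0) := by
      have := (S.continuous.tendsto 0).comp hTy
      simpa using (by exact this : Filter.Tendsto (fun n => S (T (y (φ n)))) Filter.atTop (nhds (S 0)))
    have hyconv : Filter.Tendsto (fun n => y (φ n)) Filter.atTop (nhds (-z)) := by
      have heq : ∀ n, y (φ n) = S (T (y (φ n))) - Kc (y (φ n)) := by
        intro n
        have := hpt (y (φ n))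
        rw [this, add_sub_cancel_right]
      rw [show (fun n => y (φ n)) = fun n => S (T (y (φ n))) - Kc (y (φ n)) from funext heq]
      have := hSTy.sub hz
      simpa using this
    have hwnorm : ‖(-z : H)‖ = 1 := by
      have h1 : Filter.Tendsto (fun n => ‖y (φ n)‖) Filter.atTop (nhds ‖(-z : H)‖) :=
        (continuous_norm.tendsto _).comp hyconv
      have h2 : (fun n => ‖y (φ n)‖) = fun _ => (1:ℝ) := funext fun n => hy1 (φ n)
      rw [h2] at h1
      exact (tendsto_const_nhds_iff.mp h1).symm
    have hwM : (-z : H) ∈ M := by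
      have : IsClosed (M : Set H) := N.isClosed_orthogonal
      exact this.mem_of_tendsto hyconv (Filter.Eventually.of_forall fun n => hyM (φ n))
    have hwN : (-z : H) ∈ N := by
      have hTw : Filter.Tendsto (fun n => T (y (φ n))) Filter.atTop (nhds (T (-z))) :=
        (T.continuous.tendsto _).comp hyconv
      have : T (-z) = 0 := tendsto_nhds_unique hTw hTy
      exact this
    have hz0 : (-z : H) = 0 := by
      have hd := N.orthogonal_disjoint
      have hm : (-z : H) ∈ N ⊓ Nᗮ := ⟨hwN, hwM⟩
      rw [hd.eq_bot] at hm
      simpa using hm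
    rw [hz0] at hwnorm
    norm_num at hwnorm
  obtain ⟨c, hc, hbound⟩ := key
  set T' := T.comp M.subtypeL with hT'
  have hanti : AntilipschitzWith (⟨c, hc.le⟩ : NNReal) T' := by
    apply T'.antilipschitz_of_bound
    intro x
    exact hbound x
  have hclosed' : IsClosed (LinearMap.range (T' : M →ₗ[ℂ] H) : Set H) := by
    have h := closed_range_of_antilipschitz hanti
    have h2 : closure (LinearMap.range (T' : M →ₗ[ℂ] H) : Set H) =
        (LinearMap.range (T' : M →ₗ[ℂ] H) : Set H) := by
      rw [← Submodule.topologicalClosure_coe, h]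
    exact isClosed_of_closure_subset h2.le
  have hrange_eq : (LinearMap.range (T : H →ₗ[ℂ] H) : Set H) =
      (LinearMap.range (T' : M →ₗ[ℂ] H) : Set H) := by
    ext w
    constructor
    · rintro ⟨x, rfl⟩
      haveI : CompleteSpace N := FiniteDimensional.complete ℂ N
      set p := N.starProjection x with hp
      have hxp : x - p ∈ M := N.sub_starProjection_mem_orthogonal x
      have hpN : p ∈ N := N.starProjection_apply_mem x
      have hTp : T p = 0 := hpN
      refine ⟨⟨x - p, hxp⟩, ?_⟩
      show T (x - p) = T x
      rw [map_sub, hTp, sub_zero]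
    · rintro ⟨x, rfl⟩
      exact ⟨(x : H), rfl⟩
  rw [hrange_eq]
  exact hclosed'

end Aux

/-- If `P` is an orthogonal projection and `u` is invertible with `[P, u]`, `[P, u⁻¹]` compact,
then `T := PuP + (I - P)` has finite-dimensional kernel, finite-dimensional kernel of the
adjoint, and closed range. -/
theorem toeplitz_stmt5 {H : Type*} [NormedAddCommGroup H] [InnerProductSpace ℂ H]
    [CompleteSpace H] (P u v : H →L[ℂ] H)
    (hP : P * P = P) (hPadj : ContinuousLinearMap.adjoint P = P)
    (huv : u * v = 1) (hvu : v * u = 1)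
    (hcu : IsCompactOperator ⇑(P * u - u * P))
    (hcv : IsCompactOperator ⇑(P * v - v * P))
    (T : H →L[ℂ] H) (hT : T = P * u * P + (1 - P)) :
    FiniteDimensional ℂ (LinearMap.ker (T : H →ₗ[ℂ] H)) ∧
      FiniteDimensional ℂ (LinearMap.ker (ContinuousLinearMap.adjoint T : H →ₗ[ℂ] H)) ∧
      IsClosed (LinearMap.range (T : H →ₗ[ℂ] H) : Set H) := by
  have hP' : ∀ x : H →L[ℂ] H, P * (P * x) = P * x := fun x => by rw [← mul_assoc, hP]
  have huv' : ∀ x : H →L[ℂ] H, u * (v * x) = x := fun x => by rw [← mul_assoc, huv, one_mul]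
  have hvu' : ∀ x : H →L[ℂ] H, v * (u * x) = x := fun x => by rw [← mul_assoc, hvu, one_mul]
  set S : H →L[ℂ] H := P * v * P + (1 - P) with hS
  have hST : S * T - 1 = P * (v * ((P * u - u * P) * P)) := by
    rw [hT, hS]
    simp only [mul_sub, sub_mul, mul_add, add_mul, mul_one, one_mul, mul_assoc,
      hP', huv', hvu', hP]
    abel
  have hTS : T * S - 1 = P * (u * ((P * v - v * P) * P)) := by
    rw [hT, hS]
    simp only [mul_sub, sub_mul, mul_add, add_mul, mul_one, one_mul, mul_assoc,
      hP', huv', hvu', hP]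
    abel
  have hK1 : IsCompactOperator ⇑(S * T - 1) := by
    rw [hST]
    have h := (hcu.comp_clm P).clm_comp (P * v)
    have heq : ⇑(P * (v * ((P * u - u * P) * P))) = ⇑(P * v) ∘ (⇑(P * u - u * P) ∘ ⇑P) := by
      ext x; simp [ContinuousLinearMap.mul_apply]
    rw [heq]; exact h
  have hK2 : IsCompactOperator ⇑(T * S - 1) := by
    rw [hTS]
    have h := (hcv.comp_clm P).clm_comp (P * u)
    have heq : ⇑(P * (u * ((P * v - v * P) * P))) = ⇑(P * u) ∘ (⇑(P * v - v * P) ∘ ⇑P) := by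
      ext x; simp [ContinuousLinearMap.mul_apply]
    rw [heq]; exact h
  obtain ⟨hker, hrange⟩ := aux_atkinson T S hK1
  have hKadj : IsCompactOperator ⇑(ContinuousLinearMap.adjoint (T * S - 1)) :=
    aux_adjoint_compact _ hK2
  have hBA : ContinuousLinearMap.adjoint S * ContinuousLinearMap.adjoint T - 1 =
      ContinuousLinearMap.adjoint (T * S - 1) := by
    rw [← ContinuousLinearMap.star_eq_adjoint, ← ContinuousLinearMap.star_eq_adjoint,
      ← ContinuousLinearMap.star_eq_adjoint, star_sub, star_mul, star_one]
  have hKadj' : IsCompactOperator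
      ⇑(ContinuousLinearMap.adjoint S * ContinuousLinearMap.adjoint T - 1) := by
    rw [hBA]; exact hKadj
  obtain ⟨hkeradj, -⟩ := aux_atkinson (ContinuousLinearMap.adjoint T)
    (ContinuousLinearMap.adjoint S) hKadj'
  exact ⟨hker, hkeradj, hrange⟩
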